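/- Let t ≥ 1, n : Fin t → ℕ with 2 ≤ n j for all j, and N = ∏ j, n j. Suppose there exists k₀ : Fin t such that 6 · |{ j : Fin t | n j ≤ n k₀ }| = n k₀ · ((n k₀)² − 1). Then for every bijection v : Fin N → (Π j : Fin t, Fin (n j)) satisfying hammingDist (v i) (v (i+k)) ≥ t + 1 − k for all i and all 1 ≤ k < t with i + k < N, it holds that for every index i and every s with 1 ≤ s ≤ n k₀ and i + s < N, hammingDist (v i) (v (i+s)) = t − (s − 1); that is, v i and v (i+s) share exactly s − 1 coordinates. -/

import Mathlib

open Finset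

private lemma aux_sq_sub_one (m : ℕ) : m^2 - 1 = (m-1)*(m+1) := by
  cases m with
  | zero => simp
  | succ k =>
    have h : (k+1)^2 = k*(k+2)+1 := by ring
    rw [h]
    simp [Nat.add_sub_cancel]

private lemma aux_gauss (m : ℕ) :
    6 * ∑ q ∈ range (m+1), ∑ p ∈ range q, (q - p - 1) = (m-1)*m*(m+1) := by
  induction m with
  | zero => simp
  | succ k ih =>
    rw [Finset.sum_range_succ, Nat.mul_add, ih]
    have h1 : ∑ p ∈ range (k+1), (k+1-p-1) = ∑ p ∈ range (k+1), (k+1-1-p) := by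
      apply Finset.sum_congr rfl; intro p hp; omega
    have h2 : ∑ p ∈ range (k+1), (k+1-1-p) = ∑ p ∈ range (k+1), p :=
      Finset.sum_range_reflect (fun p => p) (k+1)
    have h3 : (∑ p ∈ range (k+1), p) * 2 = (k+1)*k := by
      rw [Finset.sum_range_id_mul_two]; simp
    rw [h1, h2]
    cases k with
    | zero => simp
    | succ j =>
      simp only [Nat.add_sub_cancel] at *
      zify at h3 ⊢
      linear_combination 3 * h3

/-- Theorem (BoundaryForcedGeneral): if 6·t̄_{k₀} = n k₀ (n k₀² − 1) for some factor k₀, then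
in any ordering inducing a consecutive radio labeling, v i and v (i+s) share exactly s − 1
coordinates for every 1 ≤ s ≤ n k₀. -/
theorem stmt_7 (t : ℕ) (ht : 1 ≤ t) (n : Fin t → ℕ) (hn : ∀ j, 2 ≤ n j)
    (N : ℕ) (hN : N = ∏ j, n j) (k₀ : Fin t)
    (hk : 6 * Nat.card {j : Fin t // n j ≤ n k₀} = n k₀ * ((n k₀) ^ 2 - 1))
    (v : Fin N → ∀ j : Fin t, Fin (n j)) (hbij : Function.Bijective v)
    (hrad : ∀ i k : ℕ, 1 ≤ k → k < t → (h : i + k < N) →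
      hammingDist (v ⟨i, by omega⟩) (v ⟨i + k, h⟩) ≥ t + 1 - k) :
    ∀ i s : ℕ, 1 ≤ s → s ≤ n k₀ → (h : i + s < N) →
      hammingDist (v ⟨i, by omega⟩) (v ⟨i + s, h⟩) = t - (s - 1) := by
  intro i s hs1 hs2 h
  have hveq : ∀ (p q : ℕ) (hp : p < N) (hq : q < N), p = q →
      v ⟨p, hp⟩ = v ⟨q, hq⟩ := by
    intro p q hp hq hpq
    subst hpq
    rfl
  have hm2 : 2 ≤ n k₀ := hn k₀
  have hN0 : 0 < N := by
    rw [hN]; exact Finset.prod_pos (fun j _ => by have := hn j; omega)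
  have hSc : 6 * (univ.filter fun j => n j ≤ n k₀).card = n k₀ * ((n k₀)^2 - 1) := by
    rw [← hk]; congr 1
    rw [Nat.card_eq_fintype_card, Fintype.card_subtype]
  have hdist_le : ∀ x y : ∀ j, Fin (n j),
      (univ.filter fun j => x j = y j).card + hammingDist x y = t := by
    intro x y
    have h := Finset.card_filter_add_card_filter_not
      (s := (univ : Finset (Fin t))) (p := fun j => x j = y j)
    simpa [hammingDist, Finset.card_univ] using h
  have hne' : ∀ (p q : ℕ) (hp : p < N) (hq : q < N), p ≠ q →
      hammingDist (v ⟨p, hp⟩) (v ⟨q, hq⟩) ≠ 0 := by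
    intro p q hp hq hpq h0
    rw [hammingDist_eq_zero] at h0
    exact hpq (congrArg Fin.val (hbij.injective h0))
  by_cases htN : n k₀ + 1 ≤ N
  · -- main case: a full window fits
    set a := min i (N - (n k₀ + 1)) with hadef
    have ha1 : a ≤ i := min_le_left _ _
    have ha2 : a + n k₀ < N := by omega
    have ha3 : i + s ≤ a + n k₀ := by omega
    set w : ℕ → ∀ j, Fin (n j) := fun u => v ⟨(a+u) % N, Nat.mod_lt _ hN0⟩ with hwdef
    have hw : ∀ (u : ℕ) (hu : a + u < N), w u = v ⟨a+u, hu⟩ := by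
      intro u hu
      exact hveq _ _ _ _ (Nat.mod_eq_of_lt hu)
    have key_le : ∀ x ∈ (range (n k₀+1)).sigma (fun q => range q),
        (univ.filter fun j => w x.2 j = w x.1 j).card ≤ x.1 - x.2 - 1 := by
      rintro ⟨q, p⟩ hx
      simp only [Finset.mem_sigma, Finset.mem_range] at hx
      obtain ⟨hq, hp⟩ := hx
      have hpN : a + p < N := by omega
      have hqN : a + q < N := by omega
      show (univ.filter fun j => w p j = w q j).card ≤ q - p - 1
      rw [hw p hpN, hw q hqN]
      have hd := hdist_le (v ⟨a+p, hpN⟩) (v ⟨a+q, hqN⟩)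
      have hd1 := hne' (a+p) (a+q) hpN hqN (by omega)
      by_cases hlt : q - p < t
      · have hr' : t + 1 - (q-p) ≤ hammingDist (v ⟨a+p, hpN⟩) (v ⟨a+q, hqN⟩) := by
          have e : v ⟨(a+p) + (q-p), by omega⟩ = v ⟨a+q, hqN⟩ :=
            hveq _ _ (by omega) hqN (by omega)
          rw [← e]
          exact hrad (a+p) (q-p) (by omega) hlt (by omega)
        omega
      · omega
    have hone : ∀ j : Fin t, n j ≤ n k₀ →
        1 ≤ (((range (n k₀+1)).sigma (fun q => range q)).filter
              fun x => w x.2 j = w x.1 j).card := by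
      intro j hj
      rw [Nat.one_le_iff_ne_zero, ← Nat.pos_iff_ne_zero, Finset.card_pos]
      obtain ⟨u, hu, u', hu', hne, heq⟩ :=
        Finset.exists_ne_map_eq_of_card_lt_of_maps_to
          (s := range (n k₀+1)) (t := (univ : Finset (Fin (n j))))
          (by simpa using Nat.lt_succ_of_le hj)
          (f := fun u => w u j) (fun u _ => Finset.mem_univ _)
      rw [Finset.mem_range] at hu hu'
      rcases Nat.lt_or_ge u u' with hlt | hge
      · exact ⟨⟨u', u⟩, Finset.mem_filter.2
          ⟨Finset.mem_sigma.2 ⟨Finset.mem_range.2 hu', Finset.mem_range.2 hlt⟩, heq.symm ▸ rfl⟩⟩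
      · have hlt' : u' < u := by omega
        exact ⟨⟨u, u'⟩, Finset.mem_filter.2
          ⟨Finset.mem_sigma.2 ⟨Finset.mem_range.2 hu, Finset.mem_range.2 hlt'⟩, heq ▸ rfl⟩⟩
    have hswap : ∑ x ∈ (range (n k₀+1)).sigma (fun q => range q),
          (univ.filter fun j => w x.2 j = w x.1 j).card
        = ∑ j : Fin t, (((range (n k₀+1)).sigma (fun q => range q)).filter
              fun x => w x.2 j = w x.1 j).card := by
      simp only [Finset.card_filter]
      exact Finset.sum_comm
    have hlow : (univ.filter fun j => n j ≤ n k₀).card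
        ≤ ∑ x ∈ (range (n k₀+1)).sigma (fun q => range q),
            (univ.filter fun j => w x.2 j = w x.1 j).card := by
      rw [hswap]
      calc (univ.filter fun j => n j ≤ n k₀).card
          = ∑ j ∈ univ.filter (fun j => n j ≤ n k₀), 1 := by simp
        _ ≤ ∑ j ∈ univ.filter (fun j => n j ≤ n k₀),
              (((range (n k₀+1)).sigma (fun q => range q)).filter
                fun x => w x.2 j = w x.1 j).card :=
            Finset.sum_le_sum (fun j hj => hone j (Finset.mem_filter.1 hj).2)
        _ ≤ ∑ j : Fin t, (((range (n k₀+1)).sigma (fun q => range q)).filter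
                fun x => w x.2 j = w x.1 j).card :=
            Finset.sum_le_sum_of_subset (Finset.filter_subset _ _)
    have hup : ∑ x ∈ (range (n k₀+1)).sigma (fun q => range q),
          (univ.filter fun j => w x.2 j = w x.1 j).card
        ≤ ∑ x ∈ (range (n k₀+1)).sigma (fun q => range q), (x.1 - x.2 - 1) :=
      Finset.sum_le_sum key_le
    have hgauss : 6 * ∑ x ∈ (range (n k₀+1)).sigma (fun q => range q), (x.1 - x.2 - 1)
        = n k₀ * ((n k₀)^2 - 1) := by
      rw [Finset.sum_sigma]
      simp only
      rw [aux_gauss, aux_sq_sub_one]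
      ring
    have hUS : ∑ x ∈ (range (n k₀+1)).sigma (fun q => range q), (x.1 - x.2 - 1)
        = (univ.filter fun j => n j ≤ n k₀).card := by
      have h66 : 6 * ∑ x ∈ (range (n k₀+1)).sigma (fun q => range q), (x.1 - x.2 - 1)
          = 6 * (univ.filter fun j => n j ≤ n k₀).card := by rw [hgauss, hSc]
      omega
    have hTeq : ∑ x ∈ (range (n k₀+1)).sigma (fun q => range q),
          (univ.filter fun j => w x.2 j = w x.1 j).card
        = ∑ x ∈ (range (n k₀+1)).sigma (fun q => range q), (x.1 - x.2 - 1) := by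
      omega
    have hx0 : (⟨i+s-a, i-a⟩ : Σ _ : ℕ, ℕ) ∈ (range (n k₀+1)).sigma (fun q => range q) := by
      simp only [Finset.mem_sigma, Finset.mem_range]
      omega
    have hfin : (univ.filter fun j => w (i-a) j = w (i+s-a) j).card
        = (i+s-a) - (i-a) - 1 :=
      (Finset.sum_eq_sum_iff_of_le key_le).1 hTeq _ hx0
    have hw1 : w (i-a) = v ⟨i, by omega⟩ :=
      (hw (i-a) (by omega)).trans (hveq _ _ (by omega) (by omega) (by omega))
    have hw2 : w (i+s-a) = v ⟨i+s, h⟩ :=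
      (hw (i+s-a) (by omega)).trans (hveq _ _ (by omega) h (by omega))
    rw [hw1, hw2] at hfin
    have hc : i+s-a - (i-a) - 1 = s - 1 := by omega
    rw [hc] at hfin
    have hd := hdist_le (v ⟨i, by omega⟩) (v ⟨i+s, h⟩)
    have final : ∀ x y : (∀ j, Fin (n j)),
        (univ.filter fun j => x j = y j).card = s - 1 →
        hammingDist x y = t - (s-1) := by
      intro x y hc'
      have := hdist_le x y
      omega
    exact final _ _ hfin
  · -- degenerate case: N ≤ n k₀, forces t = 1, n k₀ = 2, s = 1
    push_neg at htN
    have hdvd : n k₀ ∣ N := hN ▸ Finset.dvd_prod_of_mem n (Finset.mem_univ k₀)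
    have hNm : n k₀ ≤ N := Nat.le_of_dvd hN0 hdvd
    have ht1 : t = 1 := by
      by_contra hne
      have h2t : 2 ≤ t := by omega
      obtain ⟨j, hj⟩ : ∃ j : Fin t, j ≠ k₀ :=
        Fintype.exists_ne_of_one_lt_card (by rw [Fintype.card_fin]; omega) k₀
      have hle : n k₀ * n j ≤ N := by
        rw [hN, ← Finset.mul_prod_erase univ n (Finset.mem_univ k₀)]
        exact Nat.mul_le_mul_left _ (Finset.single_le_prod'
          (fun i _ => by have := hn i; omega)
          (Finset.mem_erase.2 ⟨hj, Finset.mem_univ j⟩))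
      have h5 : n k₀ * 2 ≤ N := le_trans (Nat.mul_le_mul_left _ (hn j)) hle
      omega
    have hfilt : (univ.filter fun j => n j ≤ n k₀).card = 1 := by
      have hle : (univ.filter fun j => n j ≤ n k₀).card ≤ 1 := by
        calc (univ.filter fun j => n j ≤ n k₀).card
            ≤ (univ : Finset (Fin t)).card := Finset.card_filter_le _ _
          _ = 1 := by simp [ht1]
      have hpos : 0 < (univ.filter fun j => n j ≤ n k₀).card :=
        Finset.card_pos.2 ⟨k₀, Finset.mem_filter.2 ⟨Finset.mem_univ _, le_refl _⟩⟩
      omega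
    have h6 : 6 = n k₀ * ((n k₀)^2 - 1) := by rw [← hSc, hfilt]
    have hm2' : n k₀ ≤ 2 := by
      by_contra hcon
      push_neg at hcon
      have hc3 : 3 ≤ n k₀ := hcon
      have e1 : (n k₀)^2 = n k₀ * n k₀ := sq (n k₀)
      have e2 : n k₀ * 3 ≤ n k₀ * n k₀ := Nat.mul_le_mul_left _ hc3
      have e3 : n k₀ * (n k₀ + 1) ≤ n k₀ * ((n k₀)^2 - 1) :=
        Nat.mul_le_mul_left _ (by omega)
      have e4 : 3 * (n k₀ + 1) ≤ n k₀ * (n k₀ + 1) := Nat.mul_le_mul_right _ hc3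
      omega
    have hs' : s = 1 := by omega
    have key : ∀ x y : Fin N, x ≠ y → hammingDist (v x) (v y) = t - (s-1) := by
      intro x y hxy
      have h1 : hammingDist (v x) (v y) ≤ t :=
        le_trans hammingDist_le_card_fintype (le_of_eq (Fintype.card_fin t))
      have h2 : hammingDist (v x) (v y) ≠ 0 := by
        intro h0
        rw [hammingDist_eq_zero] at h0
        exact hxy (hbij.injective h0)
      omega
    exact key _ _ (by
      intro hEq
      have := congrArg Fin.val hEq
      simp at this
      omega)
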